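/- Let p ⊆ R be a prime ideal, g ∈ ℤ^n, a ∈ 𝒜(g) and b ∈ 𝒜(−g). If b·a ∈ ι(R) \ ι(p) (note b·a ∈ 𝒜(0) = ι(R) automatically), then a^*·a ∈ ι(R) \ ι(p). -/
import Mathlib


/-- Lemma `primestar`: in a `ℤ^n`-graded algebra `A` with degree-zero
subalgebra `ι(R)` and anti-involution `*`, if `p ⊆ R` is prime, `a ∈ 𝒜 g`,
`b ∈ 𝒜 (−g)` and `b·a ∈ ι(R) \ ι(p)`, then `a^*·a ∈ ι(R) \ ι(p)`. -/
theorem stmt_14 {K A R : Type*} [Field K] [Ring A] [Algebra K A]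
    [CommRing R] [Algebra K R]
    (n : ℕ) (hn : 1 ≤ n)
    (𝒜 : (Fin n → ℤ) → Submodule K A)
    (hdirect : DirectSum.IsInternal 𝒜)
    (hone : (1 : A) ∈ 𝒜 0)
    (hgmul : ∀ g h : Fin n → ℤ, ∀ a ∈ 𝒜 g, ∀ b ∈ 𝒜 h, a * b ∈ 𝒜 (g + h))
    (ι : R →ₐ[K] A) (hinj : Function.Injective ι)
    (hrange : (𝒜 0 : Set A) = Set.range ι)
    (σ : (Fin n → ℤ) → (R ≃ₐ[K] R))
    (hσ : ∀ g h : Fin n → ℤ, σ (g + h) = σ g * σ h)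
    (hcomm : ∀ g : Fin n → ℤ, ∀ a ∈ 𝒜 g, ∀ r : R, a * ι r = ι (σ g r) * a)
    (st : A →ₗ[K] A)
    (hst_mul : ∀ x y : A, st (x * y) = st y * st x)
    (hst_invol : ∀ x : A, st (st x) = x)
    (hst_grade : ∀ g : Fin n → ℤ, ∀ a ∈ 𝒜 g, st a ∈ 𝒜 (-g))
    (hst_R : ∀ r : R, st (ι r) = ι r)
    (p : Ideal R) (hp : p.IsPrime)
    (g : Fin n → ℤ) (a : A) (ha : a ∈ 𝒜 g) (b : A) (hb : b ∈ 𝒜 (-g))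
    (hba : b * a ∈ Set.range ⇑ι \ ⇑ι '' ↑p) :
    st a * a ∈ Set.range ⇑ι \ ⇑ι '' ↑p := by
  obtain ⟨⟨r, hr⟩, hnot⟩ := hba
  -- st a * a ∈ 𝒜 0 = range ι
  have hsa : st a ∈ 𝒜 (-g) := hst_grade g a ha
  have h0 : st a * a ∈ 𝒜 0 := by
    have := hgmul (-g) g _ hsa a ha
    simpa using this
  have hs : ∃ s, ι s = st a * a := by
    have : st a * a ∈ (𝒜 0 : Set A) := h0
    rwa [hrange] at this
  obtain ⟨s, hs⟩ := hs
  -- st b * b ∈ 𝒜 0 = range ι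
  have hsb : st b ∈ 𝒜 g := by
    have := hst_grade (-g) b hb
    simpa using this
  have h0' : st b * b ∈ 𝒜 0 := by
    have := hgmul g (-g) _ hsb b hb
    simpa using this
  have ht : ∃ t, ι t = st b * b := by
    have : st b * b ∈ (𝒜 0 : Set A) := h0'
    rwa [hrange] at this
  obtain ⟨t, ht⟩ := ht
  -- st a * st b = ι r
  have hkey : st a * st b = ι r := by
    have := hst_mul b a
    rw [← hr, hst_R] at this
    exact this.symm
  -- ι (r * r) = ι (σ (-g) t * s)
  have hcalc : ι (r * r) = ι (σ (-g) t * s) := by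
    have h1 : ι r * ι r = st a * st b * (b * a) := by rw [hkey, hr]
    have h2 : st a * st b * (b * a) = st a * ι t * a := by
      rw [mul_assoc, ← mul_assoc (st b) b a, ← ht, ← mul_assoc]
    have h3 : st a * ι t = ι (σ (-g) t) * st a := hcomm (-g) (st a) hsa t
    calc ι (r * r) = ι r * ι r := by rw [map_mul]
      _ = st a * ι t * a := by rw [h1, h2]
      _ = ι (σ (-g) t) * (st a * a) := by rw [h3, mul_assoc]
      _ = ι (σ (-g) t) * ι s := by rw [hs]
      _ = ι (σ (-g) t * s) := by rw [map_mul]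
  have heq : r * r = σ (-g) t * s := hinj hcalc
  refine ⟨⟨s, hs⟩, ?_⟩
  rintro ⟨s', hs'p, hs'⟩
  have hsp : s ∈ p := hinj (hs'.trans hs.symm) ▸ hs'p
  have hrr : r * r ∈ p := heq ▸ Ideal.mul_mem_left p _ hsp
  have hrp : r ∈ p := (hp.mem_or_mem hrr).elim id id
  exact hnot ⟨r, hrp, hr⟩
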